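/- Let E be a finite-dimensional real normed affine space and let b be an affine basis of E indexed by a nonempty finite type, with barycentric coordinate functions λ_i = b.coord i. Then for every point x lying in the frontier (topological boundary) of the convex hull of the basis points, the product Π_i λ_i(x) equals 0; i.e., the bubble function Π_i λ_i vanishes on the boundary of the simplex spanned by the basis points. -/

import Mathlib

/-- The bubble function, i.e. the product of all barycentric coordinate
functions of an affine basis, vanishes on the topological boundary of the
simplex spanned by the basis points. -/
theorem bubble_vanishes_on_boundary
    {ι : Type*} [Fintype ι] [Nonempty ι]
    {E : Type*} [NormedAddCommGroup E] [NormedSpace ℝ E] [FiniteDimensional ℝ E]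
    (b : AffineBasis ι ℝ E) :
    ∀ x ∈ frontier (convexHull ℝ (Set.range b)), (∏ i, b.coord i x) = 0 := by
  intro x hx
  have hclosed : IsClosed (convexHull ℝ (Set.range b)) :=
    ((Set.finite_range b).isCompact_convexHull ℝ).isClosed
  rw [frontier, hclosed.closure_eq] at hx
  obtain ⟨hmem, hnint⟩ := hx
  rw [b.interior_convexHull] at hnint
  simp only [Set.mem_setOf_eq, not_forall, not_lt] at hnint
  obtain ⟨i, hi⟩ := hnint
  rw [b.convexHull_eq_nonneg_coord] at hmem
  exact Finset.prod_eq_zero (Finset.mem_univ i) (le_antisymm hi (hmem i))
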